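/- Let A be a d×d Metzler matrix that is Hurwitz stable. Then there exists a vector v ∈ ℝ^d with all entries strictly positive such that all entries of Av are strictly negative. -/

import Mathlib

open Matrix Polynomial Filter
open scoped Topology ENNReal NNReal

attribute [local instance] Matrix.linftyOpNormedRing Matrix.linftyOpNormedAlgebra

private lemma aux_entry_le {d : ℕ} (M : Matrix (Fin d) (Fin d) ℂ) (i j : Fin d) :
    ‖M i j‖ ≤ ‖M‖ := by
  have h1 : ‖M i j‖₊ ≤ ∑ k, ‖M i k‖₊ :=
    Finset.single_le_sum (f := fun k => ‖M i k‖₊) (fun _ _ => zero_le) (Finset.mem_univ j)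
  have h2 : (∑ k, ‖M i k‖₊) ≤ ‖M‖₊ := by
    rw [Matrix.linfty_opNNNorm_def]
    exact Finset.le_sup (f := fun i => ∑ k, ‖M i k‖₊) (Finset.mem_univ i)
  exact_mod_cast h1.trans h2

private lemma aux_eval_cp {d : ℕ} (M : Matrix (Fin d) (Fin d) ℂ) (z : ℂ) :
    M.charpoly.eval z = (Matrix.scalar (Fin d) z - M).det := by
  rw [Matrix.charpoly, _root_.eval_det, matPolyEquiv_charmatrix]
  simp

private lemma aux_root_of_spectrum {d : ℕ} (M : Matrix (Fin d) (Fin d) ℂ) (z : ℂ)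
    (h : z ∈ spectrum ℂ M) : M.charpoly.IsRoot z := by
  rw [spectrum.mem_iff] at h
  rw [Polynomial.IsRoot, aux_eval_cp]
  by_contra hne
  exact h ((Matrix.isUnit_iff_isUnit_det _).2 (by
    have hrfl : algebraMap ℂ (Matrix (Fin d) (Fin d) ℂ) z = Matrix.scalar (Fin d) z := rfl
    rw [hrfl]
    exact isUnit_iff_ne_zero.2 hne))

private lemma aux_pow_bound {d : ℕ} [Nonempty (Fin d)] (M : Matrix (Fin d) (Fin d) ℂ) {s : ℝ}
    (hs : 0 < s) (hspec : ∀ z ∈ spectrum ℂ M, ‖z‖ < s) :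
    Tendsto (fun n => s⁻¹ ^ n * ‖M ^ n‖) atTop (𝓝 0) := by
  haveI : CompleteSpace (Matrix (Fin d) (Fin d) ℂ) := FiniteDimensional.complete ℂ _
  have hρ : spectralRadius ℂ M < (s.toNNReal : ℝ≥0∞) := by
    apply spectrum.spectralRadius_lt_of_forall_lt
    intro z hz
    have hzs := hspec z hz
    rw [← NNReal.coe_lt_coe, coe_nnnorm, Real.coe_toNNReal _ hs.le]
    exact hzs
  obtain ⟨r, hr1, hr2⟩ := ENNReal.lt_iff_exists_nnreal_btwn.1 hρ
  have hgel := spectrum.pow_nnnorm_pow_one_div_tendsto_nhds_spectralRadius M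
  have hev : ∀ᶠ n : ℕ in atTop, (‖M ^ n‖₊ : ℝ≥0∞) ^ (1 / (n:ℝ)) < (r : ℝ≥0∞) :=
    hgel.eventually_lt_const hr1
  have hrs : (r : ℝ) < s := by
    rw [ENNReal.coe_lt_coe] at hr2
    calc (r:ℝ) < (s.toNNReal : ℝ) := by exact_mod_cast hr2
    _ = s := Real.coe_toNNReal _ hs.le
  have hb : ∀ᶠ n : ℕ in atTop, ‖M ^ n‖ ≤ (r : ℝ) ^ n := by
    filter_upwards [hev, eventually_ge_atTop 1] with n hn hn1
    have hx : (‖M ^ n‖₊ : ℝ≥0∞) < (r : ℝ≥0∞) ^ (n : ℕ) := by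
      have h2 := ENNReal.rpow_lt_rpow hn (by positivity : (0:ℝ) < (n:ℝ))
      rwa [← ENNReal.rpow_mul, one_div, inv_mul_cancel₀ (by positivity : (n:ℝ) ≠ 0),
        ENNReal.rpow_one, ENNReal.rpow_natCast] at h2
    have h3 : ‖M ^ n‖₊ < r ^ n := by
      rw [← ENNReal.coe_pow, ENNReal.coe_lt_coe] at hx
      exact hx
    calc ‖M ^ n‖ = ((‖M ^ n‖₊ : ℝ≥0) : ℝ) := rfl
    _ ≤ ((r ^ n : ℝ≥0) : ℝ) := by exact_mod_cast h3.le
    _ = (r:ℝ) ^ n := by push_cast; ring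
  apply squeeze_zero' (g := fun n => ((r:ℝ) / s) ^ n)
  · filter_upwards with n; positivity
  · filter_upwards [hb] with n hn
    rw [div_pow, div_eq_inv_mul, inv_pow]
    exact mul_le_mul_of_nonneg_left hn (by positivity)
  · exact tendsto_pow_atTop_nhds_zero_of_lt_one (by positivity)
      (by rw [div_lt_one hs]; exact hrs)

/-- A real square matrix is Metzler if all off-diagonal entries are nonnegative. -/
def Matrix.IsMetzler {d : ℕ} (A : Matrix (Fin d) (Fin d) ℝ) : Prop :=
  ∀ i j, i ≠ j → 0 ≤ A i j

/-- A real square matrix is Hurwitz stable if every (complex) eigenvalue has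
negative real part. -/
def Matrix.IsHurwitz {d : ℕ} (A : Matrix (Fin d) (Fin d) ℝ) : Prop :=
  ∀ μ : ℂ, (A.map (algebraMap ℝ ℂ)).charpoly.IsRoot μ → μ.re < 0

/-- For a Metzler Hurwitz matrix there is a strictly positive vector `v` with
`A v` strictly negative componentwise. -/
theorem metzler_hurwitz_exists_positive_decreasing_direction {d : ℕ}
    (A : Matrix (Fin d) (Fin d) ℝ) (hM : A.IsMetzler) (hH : A.IsHurwitz) :
    ∃ v : Fin d → ℝ, (∀ i, 0 < v i) ∧ ∀ i, A.mulVec v i < 0 := by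
  rcases Nat.eq_zero_or_pos d with hd | hd
  · exact ⟨fun _ => 1, fun i => absurd i.2 (by omega), fun i => absurd i.2 (by omega)⟩
  haveI : Nonempty (Fin d) := ⟨⟨0, hd⟩⟩
  set f : ℝ →+* ℂ := (algebraMap ℝ ℂ : ℝ →+* ℂ) with hf
  set Ac : Matrix (Fin d) (Fin d) ℂ := A.map f with hAc
  -- A is invertible
  have hdet : A.det ≠ 0 := by
    intro h
    have h0 : Ac.charpoly.IsRoot 0 := by
      rw [Polynomial.IsRoot, aux_eval_cp]
      have : Ac.det = 0 := by
        rw [hAc, ← RingHom.mapMatrix_apply, ← RingHom.map_det, h, map_zero]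
      simp [Matrix.det_neg, this]
    have := hH 0 h0
    norm_num at this
  -- choose the shift s
  set F : Finset ℝ :=
    (Ac.charpoly.roots.toFinset.image fun μ => ‖μ‖^2 / (2 * (-μ.re))) ∪
      (Finset.univ.image fun i : Fin d => |A i i|) with hF
  obtain ⟨s₀, hs₀⟩ := F.exists_le
  set s : ℝ := max s₀ 0 + 1 with hsdef
  have hs : 0 < s := by
    have : (0:ℝ) ≤ max s₀ 0 := le_max_right _ _
    linarith
  have hs₀s : s₀ < s := by
    have : s₀ ≤ max s₀ 0 := le_max_left _ _
    linarith
  have hdiag : ∀ i, 0 ≤ s + A i i := by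
    intro i
    have hmem : |A i i| ∈ F := by
      apply Finset.mem_union_right
      exact Finset.mem_image.2 ⟨i, Finset.mem_univ i, rfl⟩
    have h1 : |A i i| ≤ s₀ := hs₀ _ hmem
    have h2 : -|A i i| ≤ A i i := neg_abs_le _
    linarith
  -- roots are pushed inside the disk of radius s
  have hroot : ∀ μ : ℂ, Ac.charpoly.IsRoot μ → ‖(s:ℂ) + μ‖ < s := by
    intro μ hμ
    have hre : μ.re < 0 := hH μ hμ
    have hrm : μ ∈ Ac.charpoly.roots := by
      exact Polynomial.mem_roots'.2 ⟨Ac.charpoly_monic.ne_zero, hμ⟩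
    have hmem : ‖μ‖^2 / (2 * (-μ.re)) ∈ F := by
      apply Finset.mem_union_left
      exact Finset.mem_image.2 ⟨μ, Multiset.mem_toFinset.2 hrm, rfl⟩
    have h1 : ‖μ‖^2 / (2 * (-μ.re)) ≤ s₀ := hs₀ _ hmem
    have hpos : 0 < 2 * (-μ.re) := by linarith
    have h2 : ‖μ‖^2 < s * (2 * (-μ.re)) := by
      have := (div_le_iff₀ hpos).1 h1
      nlinarith
    have hnorm2 : ‖(s:ℂ) + μ‖^2 = (s + μ.re)^2 + μ.im^2 := by
      rw [← Complex.normSq_eq_norm_sq]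
      simp [Complex.normSq_apply]; ring
    have hμ2 : ‖μ‖^2 = μ.re^2 + μ.im^2 := by
      rw [← Complex.normSq_eq_norm_sq]
      simp [Complex.normSq_apply]; ring
    have hlt : ‖(s:ℂ) + μ‖^2 < s^2 := by nlinarith
    exact lt_of_pow_lt_pow_left₀ 2 hs.le hlt
  -- the nonnegative matrix B
  set B : Matrix (Fin d) (Fin d) ℝ := s • (1 : Matrix (Fin d) (Fin d) ℝ) + A with hB
  have hB0 : ∀ i j, 0 ≤ B i j := by
    intro i j
    by_cases h : i = j
    · subst h
      simpa [hB, Matrix.one_apply] using hdiag i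
    · simpa [hB, Matrix.one_apply, h] using hM i j h
  have hBpow : ∀ n (i j : Fin d), 0 ≤ (B ^ n) i j := by
    intro n
    induction n with
    | zero => intro i j; by_cases h : i = j <;> simp [Matrix.one_apply, h]
    | succ n ih =>
      intro i j
      rw [pow_succ, Matrix.mul_apply]
      exact Finset.sum_nonneg fun k _ => mul_nonneg (ih i k) (hB0 k j)
  set Bc : Matrix (Fin d) (Fin d) ℂ := B.map f with hBc
  have hmapc : Bc = (s:ℂ) • (1 : Matrix (Fin d) (Fin d) ℂ) + Ac := by
    ext i j
    by_cases h : i = j <;>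
      simp [hBc, hB, hAc, Matrix.map_apply, Matrix.one_apply, h, Complex.ofReal_add,
        Complex.coe_algebraMap, hf]
  have hspec : ∀ z ∈ spectrum ℂ Bc, ‖z‖ < s := by
    intro z hz
    have hzs : (z - s) ∈ spectrum ℂ Ac := by
      rw [spectrum.mem_iff] at hz ⊢
      convert hz using 1
      rw [hmapc, Algebra.algebraMap_eq_smul_one, Algebra.algebraMap_eq_smul_one, sub_smul]
      abel
    have := hroot _ (aux_root_of_spectrum Ac _ hzs)
    rwa [add_sub_cancel] at this
  have htend := aux_pow_bound Bc hs hspec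
  -- powers of Bc and B
  have hpowmap : ∀ n, (B ^ n).map f = Bc ^ n := by
    intro n
    rw [hBc, ← RingHom.mapMatrix_apply, ← RingHom.mapMatrix_apply, map_pow]
  have hentry : ∀ (n : ℕ) (k : Fin d), |Matrix.mulVec (B ^ n) (fun _ => 1) k| ≤ d * ‖Bc ^ n‖ := by
    intro n k
    have h1 : |Matrix.mulVec (B ^ n) (fun _ => 1) k| ≤ ∑ j, |(B ^ n) k j| := by
      rw [Matrix.mulVec, dotProduct]
      simpa using Finset.abs_sum_le_sum_abs (fun j => (B ^ n) k j * 1) Finset.univ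
    have h2 : ∀ j, |(B ^ n) k j| ≤ ‖Bc ^ n‖ := by
      intro j
      have he : ‖(Bc ^ n) k j‖ = |(B ^ n) k j| := by
        rw [← hpowmap n]
        simp [Matrix.map_apply, Complex.norm_real, Real.norm_eq_abs, hf]
      rw [← he]
      exact aux_entry_le _ _ _
    calc |Matrix.mulVec (B ^ n) (fun _ => 1) k| ≤ ∑ j, |(B ^ n) k j| := h1
    _ ≤ ∑ _j : Fin d, ‖Bc ^ n‖ := Finset.sum_le_sum fun j _ => h2 j
    _ = d * ‖Bc ^ n‖ := by simp [Finset.sum_const, nsmul_eq_mul]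
  have hw : ∀ k, Tendsto (fun n => s⁻¹ ^ n * Matrix.mulVec (B ^ n) (fun _ => 1) k)
      atTop (𝓝 0) := by
    intro k
    apply squeeze_zero_norm' (a := fun n => d * (s⁻¹ ^ n * ‖Bc ^ n‖))
    · filter_upwards with n
      rw [Real.norm_eq_abs, abs_mul, abs_pow, abs_inv, abs_of_pos hs]
      calc s⁻¹ ^ n * |Matrix.mulVec (B ^ n) (fun _ => 1) k|
          ≤ s⁻¹ ^ n * (d * ‖Bc ^ n‖) :=
            mul_le_mul_of_nonneg_left (hentry n k) (by positivity)
      _ = d * (s⁻¹ ^ n * ‖Bc ^ n‖) := by ring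
    · simpa using htend.const_mul (d : ℝ)
  -- the inverse of -A
  set N : Matrix (Fin d) (Fin d) ℝ := -A with hN
  have hNdet : IsUnit N.det := by
    rw [hN, Matrix.det_neg]
    exact isUnit_iff_ne_zero.2 (by
      intro h
      rcases mul_eq_zero.1 h with h1 | h1
      · exact absurd h1 (by positivity)
      · exact hdet h1)
  set C : Matrix (Fin d) (Fin d) ℝ := N⁻¹ with hC
  have hCN : C * N = 1 := Matrix.nonsing_inv_mul N hNdet
  have hNC : N * C = 1 := Matrix.mul_nonsing_inv N hNdet
  have hNeq : N = s • (1 : Matrix (Fin d) (Fin d) ℝ) - B := by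
    rw [hN, hB]; abel
  -- telescoping identity
  have key : ∀ m : ℕ, N * (∑ n ∈ Finset.range m, s⁻¹ ^ (n+1) • B ^ n) =
      1 - s⁻¹ ^ m • B ^ m := by
    intro m
    induction m with
    | zero => simp
    | succ m ih =>
      rw [Finset.sum_range_succ, mul_add, ih]
      have h1 : N * (s⁻¹ ^ (m+1) • B ^ m) = s⁻¹ ^ m • B ^ m - s⁻¹ ^ (m+1) • B ^ (m+1) := by
        rw [hNeq, mul_smul_comm, sub_mul, smul_mul_assoc, one_mul, smul_sub, smul_smul]
        congr 2
        · rw [pow_succ, mul_assoc, inv_mul_cancel₀ hs.ne', mul_one]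
        · rw [← pow_succ']
      rw [h1]; abel
  -- the partial sums converge to v := C 1 entrywise
  set v : Fin d → ℝ := C.mulVec (fun _ => 1) with hv
  have hP : ∀ m : ℕ, (∑ n ∈ Finset.range m, s⁻¹ ^ (n+1) • B ^ n) =
      C - s⁻¹ ^ m • (C * B ^ m) := by
    intro m
    calc (∑ n ∈ Finset.range m, s⁻¹ ^ (n+1) • B ^ n)
        = (C * N) * (∑ n ∈ Finset.range m, s⁻¹ ^ (n+1) • B ^ n) := by rw [hCN, one_mul]
    _ = C * (N * (∑ n ∈ Finset.range m, s⁻¹ ^ (n+1) • B ^ n)) := by rw [mul_assoc]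
    _ = C * (1 - s⁻¹ ^ m • B ^ m) := by rw [key]
    _ = C - s⁻¹ ^ m • (C * B ^ m) := by rw [mul_sub, mul_one, mul_smul_comm]
  have hv0 : ∀ i, 0 ≤ v i := by
    intro i
    have hterm : ∀ m : ℕ,
        Matrix.mulVec (∑ n ∈ Finset.range m, s⁻¹ ^ (n+1) • B ^ n) (fun _ => 1) i =
          v i - ∑ k, C i k * (s⁻¹ ^ m * Matrix.mulVec (B ^ m) (fun _ => 1) k) := by
      intro m
      rw [hP m, Matrix.sub_mulVec, Pi.sub_apply]
      congr 1
      rw [Matrix.smul_mulVec, Pi.smul_apply, smul_eq_mul, ← Matrix.mulVec_mulVec]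
      show s⁻¹ ^ m * (Matrix.mulVec C (Matrix.mulVec (B ^ m) fun _ => (1:ℝ))) i = _
      set w : Fin d → ℝ := Matrix.mulVec (B ^ m) (fun _ => (1:ℝ)) with hwdef
      rw [Matrix.mulVec, dotProduct, Finset.mul_sum]
      apply Finset.sum_congr rfl
      intro k _
      ring
    have hlim : Tendsto (fun m =>
        Matrix.mulVec (∑ n ∈ Finset.range m, s⁻¹ ^ (n+1) • B ^ n) (fun _ => 1) i)
        atTop (𝓝 (v i)) := by
      simp_rw [hterm]
      have h2 : Tendsto (fun m => ∑ k, C i k *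
          (s⁻¹ ^ m * Matrix.mulVec (B ^ m) (fun _ => 1) k)) atTop (𝓝 0) := by
        have := tendsto_finset_sum (Finset.univ : Finset (Fin d))
          (fun k _ => ((hw k).const_mul (C i k)))
        simpa using this
      simpa using tendsto_const_nhds.sub h2
    have hnonneg : ∀ m : ℕ,
        0 ≤ Matrix.mulVec (∑ n ∈ Finset.range m, s⁻¹ ^ (n+1) • B ^ n) (fun _ => 1) i := by
      intro m
      rw [Matrix.mulVec, dotProduct]
      apply Finset.sum_nonneg
      intro j _
      have hent : (0:ℝ) ≤ (∑ n ∈ Finset.range m, s⁻¹ ^ (n+1) • B ^ n) i j := by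
        rw [Matrix.sum_apply]
        apply Finset.sum_nonneg
        intro n _
        rw [Matrix.smul_apply, smul_eq_mul]
        exact mul_nonneg (by positivity) (hBpow n i j)
      simpa using hent
    exact ge_of_tendsto hlim (Filter.Eventually.of_forall hnonneg)
  have hAv : ∀ i, A.mulVec v i = -1 := by
    intro i
    have hAC : A * C = -1 := by
      calc A * C = -(N * C) := by rw [hN]; simp
      _ = -1 := by rw [hNC]
    rw [hv, Matrix.mulVec_mulVec, hAC]
    simp [Matrix.mulVec, dotProduct, Matrix.one_apply]
  -- final perturbation
  set u : Fin d → ℝ := A.mulVec (fun _ => 1) with hu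
  set T : ℝ := ∑ j, |u j| with hT
  have hT0 : 0 ≤ T := Finset.sum_nonneg fun j _ => abs_nonneg _
  set ε : ℝ := (1 + T)⁻¹ with hε
  have hε0 : 0 < ε := by rw [hε]; positivity
  refine ⟨fun i => v i + ε, fun i => by have := hv0 i; show 0 < v i + ε; linarith, ?_⟩
  intro i
  have hsplit : A.mulVec (fun i => v i + ε) i = A.mulVec v i + ε * u i := by
    have : (fun i => v i + ε) = v + ε • (fun _ => (1:ℝ)) := by
      ext j; simp [Pi.add_apply, Pi.smul_apply, smul_eq_mul]
    rw [this, Matrix.mulVec_add, Matrix.mulVec_smul]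
    simp [hu, Pi.add_apply, Pi.smul_apply, smul_eq_mul]
  rw [hsplit, hAv i]
  have habs : |u i| ≤ T :=
    Finset.single_le_sum (f := fun j => |u j|) (fun j _ => abs_nonneg _) (Finset.mem_univ i)
  have h1 : ε * u i ≤ ε * |u i| := mul_le_mul_of_nonneg_left (le_abs_self _) hε0.le
  have h2 : ε * |u i| ≤ ε * T := mul_le_mul_of_nonneg_left habs hε0.le
  have h3 : ε * T < 1 := by
    rw [hε]
    rw [inv_mul_lt_iff₀ (by linarith)]
    linarith
  linarith
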